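/- (Extended Kautz–Singleton construction.) Let C be a code of length ñ over the alphabet [q] with q^k distinct codewords and minimum Hamming distance d̃, and let u ≥ 1 be an integer. Let φ : [q] → {0,1}^{q^u} map a symbol x to the Boolean vector, indexed by u-tuples (a_1, …, a_u) ∈ [q]^u, whose entry at (a_1, …, a_u) is 1 iff x ∈ {a_1, …, a_u}. Let M be the (ñ·q^u) × q^k Boolean matrix obtained by arranging the codewords of C as the columns of an ñ × q^k matrix over [q] and then replacing each entry x by the column vector φ(x). Then for all integers d ≥ 1 and e ≥ 0 with d + u ≤ q^k and d < (ñ − e)/((ñ − d̃)·u), the matrix M is strongly (d, e; u)-disjunct. -/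

import Mathlib

/-- Strongly `(d, e; u)`-disjunct Boolean matrix. -/
def StronglyDisjunct {ρ κ : Type*} [Fintype ρ] [DecidableEq κ]
    (M : ρ → κ → Bool) (d e u : ℕ) : Prop :=
  ∀ U W : Finset κ, U.card = u → W.card = d → Disjoint U W →
    e < (Finset.univ.filter (fun i : ρ =>
      (∀ j ∈ U, M i j = true) ∧ ∀ j ∈ W, M i j = false)).card

/-- Extended Kautz–Singleton construction. -/
theorem stmt15 (nt q k dt u d e : ℕ) (hu : 1 ≤ u) (hd : 1 ≤ d)
    (C : Finset (Fin nt → Fin q)) (hCcard : C.card = q ^ k)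
    (hdist : ∀ c ∈ C, ∀ c' ∈ C, c ≠ c' → dt ≤ hammingDist c c')
    (M : Fin nt × (Fin u → Fin q) → {c // c ∈ C} → Bool)
    (hM : ∀ p c, M p c = decide (∃ s : Fin u, p.2 s = (c : Fin nt → Fin q) p.1))
    (hsize : d + u ≤ q ^ k)
    (hcond : (d : ℝ) * ((nt : ℝ) - (dt : ℝ)) * (u : ℝ) < (nt : ℝ) - (e : ℝ)) :
    StronglyDisjunct M d e u := by
  classical
  intro U W hU hW hUW
  -- dt ≤ nt
  have hC2 : 1 < C.card := by rw [hCcard]; omega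
  obtain ⟨c1, hc1, c2, hc2, hne⟩ := Finset.one_lt_card.mp hC2
  have hdtnt : dt ≤ nt := by
    calc dt ≤ hammingDist c1 c2 := hdist c1 hc1 c2 hc2 hne
      _ ≤ nt := by simpa using hammingDist_le_card_fintype (x := c1) (y := c2)
  set Bad : Finset (Fin nt) := Finset.univ.filter (fun i =>
    ∃ c ∈ U, ∃ c' ∈ W, (c : Fin nt → Fin q) i = (c' : Fin nt → Fin q) i) with hBaddef
  set G : Finset (Fin nt) := Finset.univ.filter (fun i =>
    ∀ c ∈ U, ∀ c' ∈ W, (c : Fin nt → Fin q) i ≠ (c' : Fin nt → Fin q) i) with hGdef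
  -- per pair agreement bound
  have hpair : ∀ c ∈ U, ∀ c' ∈ W,
      (Finset.univ.filter (fun i => (c : Fin nt → Fin q) i = (c' : Fin nt → Fin q) i)).card
        ≤ nt - dt := by
    intro c hc c' hc'
    have hcne : (c : Fin nt → Fin q) ≠ (c' : Fin nt → Fin q) := by
      intro h
      have : c = c' := Subtype.ext h
      exact (Finset.disjoint_left.mp hUW hc) (this ▸ hc')
    have hdd : dt ≤ hammingDist (c : Fin nt → Fin q) (c' : Fin nt → Fin q) :=
      hdist _ c.2 _ c'.2 hcne
    have hsum := Finset.card_filter_add_card_filter_not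
      (s := (Finset.univ : Finset (Fin nt)))
      (p := fun i => (c : Fin nt → Fin q) i = (c' : Fin nt → Fin q) i)
    rw [Finset.card_univ, Fintype.card_fin] at hsum
    have hham : hammingDist (c : Fin nt → Fin q) (c' : Fin nt → Fin q)
        = (Finset.univ.filter (fun i =>
            ¬ (c : Fin nt → Fin q) i = (c' : Fin nt → Fin q) i)).card := rfl
    omega
  have hBadcard : Bad.card ≤ d * (nt - dt) * u := by
    have hsub : Bad ⊆ U.biUnion (fun c => W.biUnion (fun c' =>
        Finset.univ.filter (fun i =>
          (c : Fin nt → Fin q) i = (c' : Fin nt → Fin q) i))) := by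
      intro i hi
      simp only [hBaddef, Finset.mem_filter, Finset.mem_univ, true_and] at hi
      obtain ⟨c, hc, c', hc', h⟩ := hi
      simp only [Finset.mem_biUnion, Finset.mem_filter, Finset.mem_univ, true_and]
      exact ⟨c, hc, c', hc', h⟩
    calc Bad.card ≤ _ := Finset.card_le_card hsub
      _ ≤ ∑ c ∈ U, (W.biUnion (fun c' => Finset.univ.filter (fun i =>
            (c : Fin nt → Fin q) i = (c' : Fin nt → Fin q) i))).card :=
          Finset.card_biUnion_le
      _ ≤ ∑ c ∈ U, ∑ c' ∈ W, (Finset.univ.filter (fun i =>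
            (c : Fin nt → Fin q) i = (c' : Fin nt → Fin q) i)).card :=
          Finset.sum_le_sum (fun c _ => Finset.card_biUnion_le)
      _ ≤ ∑ c ∈ U, ∑ c' ∈ W, (nt - dt) :=
          Finset.sum_le_sum (fun c hc => Finset.sum_le_sum (fun c' hc' => hpair c hc c' hc'))
      _ = u * (d * (nt - dt)) := by simp [hU, hW, mul_comm, mul_assoc]
      _ = d * (nt - dt) * u := by ring
  -- G and Bad partition
  have hGB : G.card + Bad.card = nt := by
    have hG2 : G = Finset.univ.filter (fun i =>
        ¬ ∃ c ∈ U, ∃ c' ∈ W, (c : Fin nt → Fin q) i = (c' : Fin nt → Fin q) i) := by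
      rw [hGdef]
      apply Finset.filter_congr
      intro i _
      push_neg
      rfl
    rw [hG2, hBaddef]
    have := Finset.card_filter_add_card_filter_not
      (s := (Finset.univ : Finset (Fin nt)))
      (p := fun i => ∃ c ∈ U, ∃ c' ∈ W, (c : Fin nt → Fin q) i = (c' : Fin nt → Fin q) i)
    rw [Finset.card_univ, Fintype.card_fin] at this
    omega
  -- key numeric inequality
  have hkey : e + d * (nt - dt) * u < nt := by
    have h : ((e + d * (nt - dt) * u : ℕ) : ℝ) < (nt : ℝ) := by
      push_cast [Nat.cast_sub hdtnt]
      linarith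
    exact_mod_cast h
  have heG : e < G.card := by omega
  -- injection from G into the row set
  refine lt_of_lt_of_le heG ?_
  have hUcard : Fintype.card {x // x ∈ U} = u := by simp [hU]
  let σ : {x // x ∈ U} ≃ Fin u := U.equivFinOfCardEq hU
  let f : Fin nt → Fin nt × (Fin u → Fin q) := fun i =>
    (i, fun s => (((σ.symm s : {x // x ∈ U}) : {c // c ∈ C}) : Fin nt → Fin q) i)
  apply Finset.card_le_card_of_injOn f
  · intro i hi
    simp only [hGdef, Finset.mem_coe, Finset.mem_filter, Finset.mem_univ, true_and] at hi
    simp only [Finset.mem_coe, Finset.mem_filter, Finset.mem_univ, true_and]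
    constructor
    · intro j hj
      rw [hM]
      simp only [decide_eq_true_eq]
      exact ⟨σ ⟨j, hj⟩, by simp [f]⟩
    · intro j hj
      rw [hM]
      simp only [decide_eq_false_iff_not, not_exists]
      intro s hs
      exact hi _ (σ.symm s).2 j hj hs
  · intro a _ b _ hab
    exact congrArg Prod.fst hab
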